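/- The forest monoid 𝓕 is cancellative: for all a, b, c ∈ 𝓕, a·b = a·c implies b = c, and b·a = c·a implies b = c. -/

import Mathlib

/-- The defining relation of the forest monoid: `λ_j * λ_i = λ_i * λ_{j+1}` for `i < j`. -/
def ForestRel : FreeMonoid ℕ+ → FreeMonoid ℕ+ → Prop := fun a b =>
  ∃ i j : ℕ+, i < j ∧ a = FreeMonoid.of j * FreeMonoid.of i ∧
    b = FreeMonoid.of i * FreeMonoid.of (j + 1)

/-- The congruence generated by the forest relations. -/
def ForestCon : Con (FreeMonoid ℕ+) := conGen ForestRel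

/-- The forest monoid `𝓕`. -/
abbrev ForestMonoid := ForestCon.Quotient

/-- The generator `λ_k` of the forest monoid. -/
def lam (k : ℕ+) : ForestMonoid := ForestCon.mk' (FreeMonoid.of k)

namespace ForestAux

lemma lt_succ (x : ℕ+) : x < x + 1 := PNat.lt_add_right x 1

/-- Insert a letter on the left of a word, pushing it past bigger letters
(incrementing itself each time). -/
def ins : ℕ+ → List ℕ+ → List ℕ+
  | x, [] => [x]
  | x, b :: t => if b < x then b :: ins (x + 1) t else x :: b :: t

/-- The normal form of a word. -/
def nf (w : List ℕ+) : List ℕ+ := w.foldr ins []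

/-- Insert a letter at the right end of a (sorted) word. -/
def insR : ℕ+ → List ℕ+ → List ℕ+
  | x, [] => [x]
  | x, a :: s => if a ≤ x then a :: insR x s else x :: ((a :: s).map (· + 1))

lemma ins_ne_nil (x : ℕ+) (s : List ℕ+) : ins x s ≠ [] := by
  cases s with
  | nil => simp [ins]
  | cons b t =>
    rw [ins]
    split <;> simp

lemma ins_ins (s : List ℕ+) : ∀ i j : ℕ+, i < j →
    ins j (ins i s) = ins i (ins (j + 1) s) := by
  induction s with
  | nil =>
    intro i j h
    simp [ins, h, not_lt.2 (le_of_lt (h.trans (lt_succ j)))]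
  | cons b t ih =>
    intro i j h
    by_cases hb : b < i
    · simp only [ins, if_pos hb, if_pos (hb.trans h), if_pos (hb.trans (h.trans (lt_succ j)))]
      exact congrArg _ (ih (i + 1) (j + 1) (add_lt_add_of_lt_of_le h le_rfl))
    · by_cases hbj : b < j + 1
      · simp only [ins, if_neg hb, if_pos h, if_pos hbj]
      · simp only [ins, if_neg hb, if_pos h, if_neg hbj,
          if_neg (not_lt.2 (le_of_lt (h.trans (lt_succ j))))]

/-- The congruence "same fold of `ins`". -/
def insCon : Con (FreeMonoid ℕ+) where
  r a b := ∀ s : List ℕ+, a.toList.foldr ins s = b.toList.foldr ins s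
  iseqv := ⟨fun _ _ => rfl, fun h s => (h s).symm, fun h1 h2 s => (h1 s).trans (h2 s)⟩
  mul' := by
    intro a b c d h1 h2 s
    simp only [FreeMonoid.toList_mul, List.foldr_append]
    rw [h2 s, h1 _]

lemma forestCon_foldr {a b : FreeMonoid ℕ+} (h : ForestCon a b) :
    ∀ s : List ℕ+, a.toList.foldr ins s = b.toList.foldr ins s := by
  have hle : ForestCon ≤ insCon := by
    apply Con.conGen_le.2
    rintro x y ⟨i, j, hij, rfl, rfl⟩
    intro s
    simpa [insCon, FreeMonoid.toList_mul, List.foldr] using ins_ins s i j hij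
  exact hle h

/-- Relation on lists induced by `ForestCon`. -/
def R (a b : List ℕ+) : Prop := ForestCon (FreeMonoid.ofList a) (FreeMonoid.ofList b)

lemma R.refl (a : List ℕ+) : R a a := ForestCon.refl _

lemma R.trans {a b c : List ℕ+} (h1 : R a b) (h2 : R b c) : R a c := ForestCon.trans h1 h2

lemma R.append {a b c d : List ℕ+} (h1 : R a b) (h2 : R c d) : R (a ++ c) (b ++ d) := by
  have := ForestCon.mul h1 h2
  simpa [R, FreeMonoid.ofList_append] using this

lemma R_nf_eq {a b : List ℕ+} (h : R a b) : nf a = nf b := by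
  have := forestCon_foldr h []
  simpa [FreeMonoid.toList_ofList, nf] using this

lemma ins_con (s : List ℕ+) : ∀ x : ℕ+, R (x :: s) (ins x s) := by
  induction s with
  | nil => intro x; exact R.refl _
  | cons b t ih =>
    intro x
    by_cases hb : b < x
    · have step1 : R (x :: b :: t) (b :: (x + 1) :: t) := by
        have hrel : ForestRel (FreeMonoid.ofList [x, b]) (FreeMonoid.ofList [b, x + 1]) :=
          ⟨b, x, hb, rfl, rfl⟩
        have hbase : ForestCon (FreeMonoid.ofList [x, b]) (FreeMonoid.ofList [b, x + 1]) :=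
          ConGen.Rel.of _ _ hrel
        have : R ([x, b] ++ t) ([b, x + 1] ++ t) := R.append hbase (R.refl t)
        simpa using this
      have step2 : R (b :: (x + 1) :: t) (b :: ins (x + 1) t) := by
        have : R ([b] ++ ((x + 1) :: t)) ([b] ++ ins (x + 1) t) :=
          R.append (R.refl [b]) (ih (x + 1))
        simpa using this
      have : R (x :: b :: t) (b :: ins (x + 1) t) := step1.trans step2
      simpa [ins, if_pos hb] using this
    · simpa [ins, if_neg hb] using R.refl (x :: b :: t)

lemma nf_con (w : List ℕ+) : R w (nf w) := by
  induction w with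
  | nil => exact R.refl _
  | cons x w ih =>
    have h1 : R (x :: w) (x :: nf w) := by
      have : R ([x] ++ w) ([x] ++ nf w) := R.append (R.refl [x]) ih
      simpa using this
    exact h1.trans (ins_con (nf w) x)

lemma R_iff_nf {a b : List ℕ+} : R a b ↔ nf a = nf b := by
  constructor
  · exact R_nf_eq
  · intro h
    refine (nf_con a).trans ?_
    rw [h]
    exact ForestCon.symm (nf_con b)

lemma ins_injective (s : List ℕ+) : ∀ (x : ℕ+) (t : List ℕ+), ins x s = ins x t → s = t := by
  induction s with
  | nil =>
    intro x t h
    cases t with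
    | nil => rfl
    | cons b t' =>
      by_cases hb : b < x
      · rw [ins, ins, if_pos hb] at h
        injection h with h1 h2
        exact absurd h2.symm (ins_ne_nil _ _)
      · rw [ins, ins, if_neg hb] at h
        simp at h
  | cons a s' ih =>
    intro x t h
    cases t with
    | nil =>
      by_cases ha : a < x
      · rw [ins, ins, if_pos ha] at h
        injection h with h1 h2
        exact absurd h2 (ins_ne_nil _ _)
      · rw [ins, ins, if_neg ha] at h
        simp at h
    | cons b t' =>
      by_cases ha : a < x <;> by_cases hb : b < x
      · rw [ins, ins, if_pos ha, if_pos hb] at h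
        injection h with h1 h2
        rw [h1, ih (x + 1) t' h2]
      · rw [ins, ins, if_pos ha, if_neg hb] at h
        injection h with h1 h2
        exact absurd (h1 ▸ ha) (lt_irrefl x)
      · rw [ins, ins, if_neg ha, if_pos hb] at h
        injection h with h1 h2
        exact absurd (h1.symm ▸ hb) (lt_irrefl x)
      · rw [ins, ins, if_neg ha, if_neg hb] at h
        injection h with h1 h2

lemma mem_ins (s : List ℕ+) : ∀ (x z : ℕ+), z ∈ ins x s → x ≤ z ∨ z ∈ s := by
  induction s with
  | nil => intro x z hz; simp [ins] at hz; exact Or.inl (le_of_eq hz.symm)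
  | cons b t ih =>
    intro x z hz
    by_cases hb : b < x
    · rw [ins, if_pos hb] at hz
      rcases List.mem_cons.1 hz with h | h
      · exact Or.inr (h ▸ (List.mem_cons_self : b ∈ b :: t))
      · rcases ih (x + 1) z h with h' | h'
        · exact Or.inl ((le_of_lt (lt_succ x)).trans h')
        · exact Or.inr (List.mem_cons_of_mem _ h')
    · rw [ins, if_neg hb] at hz
      rcases List.mem_cons.1 hz with h | h
      · exact Or.inl (le_of_eq h.symm)
      · exact Or.inr h

lemma sorted_ins (s : List ℕ+) : ∀ x : ℕ+, s.Pairwise (· ≤ ·) → (ins x s).Pairwise (· ≤ ·) := by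
  induction s with
  | nil => intro x _; simp [ins]
  | cons b t ih =>
    intro x hs
    rw [List.pairwise_cons] at hs
    obtain ⟨hb_le, ht⟩ := hs
    by_cases hb : b < x
    · rw [ins, if_pos hb]
      rw [List.pairwise_cons]
      refine ⟨fun z hz => ?_, ih (x + 1) ht⟩
      rcases mem_ins t (x + 1) z hz with h | h
      · exact le_of_lt (hb.trans_le ((le_of_lt (lt_succ x)).trans h))
      · exact hb_le z h
    · rw [ins, if_neg hb]
      rw [List.pairwise_cons]
      refine ⟨fun z hz => ?_, List.pairwise_cons.2 ⟨hb_le, ht⟩⟩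
      rcases List.mem_cons.1 hz with h | h
      · exact h ▸ not_lt.1 hb
      · exact (not_lt.1 hb).trans (hb_le z h)

lemma nf_sorted (w : List ℕ+) : (nf w).Pairwise (· ≤ ·) := by
  induction w with
  | nil => simp [nf]
  | cons x w ih => exact sorted_ins (nf w) x ih

lemma ins_eq_cons {a : ℕ+} {L : List ℕ+} (h : ∀ z ∈ L, a ≤ z) : ins a L = a :: L := by
  cases L with
  | nil => rfl
  | cons b t =>
    rw [ins, if_neg (not_lt.2 (h b ((List.mem_cons_self : b ∈ b :: t))))]

lemma insR_cases (x : ℕ+) (s : List ℕ+) : ∃ h t, insR x s = h :: t ∧ h ≤ x := by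
  cases s with
  | nil => exact ⟨x, [], rfl, le_refl x⟩
  | cons a s' =>
    by_cases ha : a ≤ x
    · exact ⟨a, insR x s', by rw [insR, if_pos ha], ha⟩
    · exact ⟨x, (a :: s').map (· + 1), by rw [insR, if_neg ha], le_refl x⟩

lemma insR_ne_nil (x : ℕ+) (s : List ℕ+) : insR x s ≠ [] := by
  obtain ⟨h, t, heq, _⟩ := insR_cases x s
  simp [heq]

lemma mem_insR (s : List ℕ+) : ∀ (x z : ℕ+), z ∈ insR x s →
    x ≤ z ∨ z ∈ s ∨ ∃ w ∈ s, z = w + 1 := by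
  induction s with
  | nil => intro x z hz; simp [insR] at hz; exact Or.inl (le_of_eq hz.symm)
  | cons a s' ih =>
    intro x z hz
    by_cases ha : a ≤ x
    · rw [insR, if_pos ha] at hz
      rcases List.mem_cons.1 hz with h | h
      · exact Or.inr (Or.inl (h ▸ (List.mem_cons_self : a ∈ a :: s')))
      · rcases ih x z h with h' | h' | ⟨w, hw, hw'⟩
        · exact Or.inl h'
        · exact Or.inr (Or.inl (List.mem_cons_of_mem _ h'))
        · exact Or.inr (Or.inr ⟨w, List.mem_cons_of_mem _ hw, hw'⟩)
    · rw [insR, if_neg ha] at hz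
      rcases List.mem_cons.1 hz with h | h
      · exact Or.inl (le_of_eq h.symm)
      · simp only [List.mem_map] at h
        obtain ⟨w, hw, hw'⟩ := h
        exact Or.inr (Or.inr ⟨w, hw, hw'.symm⟩)

lemma foldr_ins_eq_insR (s : List ℕ+) : ∀ x : ℕ+, s.Pairwise (· ≤ ·) →
    s.foldr ins [x] = insR x s := by
  induction s with
  | nil => intro x _; rfl
  | cons a s' ih =>
    intro x hs
    rw [List.pairwise_cons] at hs
    obtain ⟨ha_le, hs'⟩ := hs
    rw [List.foldr_cons, ih x hs']
    by_cases ha : a ≤ x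
    · rw [insR, if_pos ha]
      refine ins_eq_cons fun z hz => ?_
      rcases mem_insR s' x z hz with h | h | ⟨w, hw, rfl⟩
      · exact ha.trans h
      · exact ha_le z h
      · exact (ha_le w hw).trans (le_of_lt (lt_succ w))
    · have hxa : x < a := not_le.1 ha
      cases s' with
      | nil =>
        rw [insR, insR, if_neg ha, ins, if_pos hxa]
        rfl
      | cons b t =>
        have hab : a ≤ b := ha_le b ((List.mem_cons_self : b ∈ b :: t))
        have hbx : ¬ b ≤ x := fun hh => ha (hab.trans hh)
        rw [insR, if_neg hbx, insR, if_neg ha, ins, if_pos hxa]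
        congr 1
        rw [List.map_cons]
        refine ins_eq_cons fun z hz => ?_
        simp only [List.map_cons, List.mem_cons, List.mem_map] at hz
        rcases hz with rfl | ⟨w, hw, rfl⟩
        · exact add_le_add hab le_rfl
        · exact add_le_add (hab.trans ((List.pairwise_cons.1 hs').1 w hw)) le_rfl

lemma insR_injective (s : List ℕ+) : ∀ (x : ℕ+) (t : List ℕ+),
    insR x s = insR x t → s = t := by
  induction s with
  | nil =>
    intro x t h
    cases t with
    | nil => rfl
    | cons b t' =>
      by_cases hb : b ≤ x
      · rw [insR, insR, if_pos hb] at h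
        injection h with h1 h2
        exact absurd h2.symm (insR_ne_nil _ _)
      · rw [insR, insR, if_neg hb] at h
        simp at h
  | cons a s' ih =>
    intro x t h
    cases t with
    | nil =>
      by_cases ha : a ≤ x
      · rw [insR, insR, if_pos ha] at h
        injection h with h1 h2
        exact absurd h2 (insR_ne_nil _ _)
      · rw [insR, insR, if_neg ha] at h
        simp at h
    | cons b t' =>
      by_cases ha : a ≤ x <;> by_cases hb : b ≤ x
      · rw [insR, insR, if_pos ha, if_pos hb] at h
        injection h with h1 h2
        rw [h1, ih x t' h2]
      · rw [insR, insR, if_pos ha, if_neg hb] at h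
        injection h with h1 h2
        obtain ⟨hh, tt, heq, hle⟩ := insR_cases x s'
        rw [heq, List.map_cons] at h2
        injection h2 with h3 h4
        subst h3
        exact absurd ((le_of_lt (lt_succ b)).trans hle) hb
      · rw [insR, insR, if_neg ha, if_pos hb] at h
        injection h with h1 h2
        obtain ⟨hh, tt, heq, hle⟩ := insR_cases x t'
        rw [heq, List.map_cons] at h2
        injection h2 with h3 h4
        rw [← h3] at hle
        exact absurd ((le_of_lt (lt_succ a)).trans hle) ha
      · rw [insR, insR, if_neg ha, if_neg hb] at h
        injection h with h1 h2
        have hinj : Function.Injective (fun z : ℕ+ => z + 1) := fun u v huv => by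
          exact add_right_cancel huv
        exact List.map_injective_iff.2 hinj h2

lemma nf_append (u v : List ℕ+) : nf (u ++ v) = u.foldr ins (nf v) := by
  simp [nf, List.foldr_append]

lemma R_left_cancel {a b c : List ℕ+} (h : R (a ++ b) (a ++ c)) : R b c := by
  rw [R_iff_nf] at h ⊢
  rw [nf_append, nf_append] at h
  induction a with
  | nil => exact h
  | cons x a ih =>
    rw [List.foldr_cons, List.foldr_cons] at h
    exact ih (ins_injective _ x _ h)

lemma nf_append_single (u : List ℕ+) (x : ℕ+) : nf (u ++ [x]) = insR x (nf u) := by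
  have h1 : R (u ++ [x]) (nf u ++ [x]) := R.append (nf_con u) (R.refl [x])
  have h2 : nf (u ++ [x]) = nf (nf u ++ [x]) := R_nf_eq h1
  rw [h2, nf_append]
  have hx : nf [x] = [x] := rfl
  rw [hx, foldr_ins_eq_insR (nf u) x (nf_sorted u)]

lemma R_right_cancel {a b c : List ℕ+} (h : R (b ++ a) (c ++ a)) : R b c := by
  induction a using List.reverseRecOn generalizing b c with
  | nil => simpa using h
  | append_singleton a' x ih =>
    have h' : R ((b ++ a') ++ [x]) ((c ++ a') ++ [x]) := by
      simpa [List.append_assoc] using h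
    have hnf := R_nf_eq h'
    rw [nf_append_single, nf_append_single] at hnf
    have := insR_injective _ x _ hnf
    exact ih (R_iff_nf.2 this)

end ForestAux

/-- the forest monoid is cancellative. -/
theorem forestMonoid_cancellative :
    (∀ a b c : ForestMonoid, a * b = a * c → b = c) ∧
    (∀ a b c : ForestMonoid, b * a = c * a → b = c) := by
  constructor
  · intro a b c h
    induction a using Con.induction_on with
    | _ a =>
      induction b using Con.induction_on with
      | _ b =>
        induction c using Con.induction_on with
        | _ c =>
          rw [← Con.coe_mul, ← Con.coe_mul, Con.eq] at h
          rw [Con.eq]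
          have hR : ForestAux.R (a.toList ++ b.toList) (a.toList ++ c.toList) := by
            simpa [ForestAux.R, FreeMonoid.ofList_append, FreeMonoid.ofList_toList] using h
          have := ForestAux.R_left_cancel hR
          simpa [ForestAux.R, FreeMonoid.ofList_toList] using this
  · intro a b c h
    induction a using Con.induction_on with
    | _ a =>
      induction b using Con.induction_on with
      | _ b =>
        induction c using Con.induction_on with
        | _ c =>
          rw [← Con.coe_mul, ← Con.coe_mul, Con.eq] at h
          rw [Con.eq]
          have hR : ForestAux.R (b.toList ++ a.toList) (c.toList ++ a.toList) := by
            simpa [ForestAux.R, FreeMonoid.ofList_append, FreeMonoid.ofList_toList] using h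
          have := ForestAux.R_right_cancel hR
          simpa [ForestAux.R, FreeMonoid.ofList_toList] using this
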